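/- Let ϑ ∈ I and let ζ be the unique fluid model solution with initial measure ϑ. Then ζ_+(t)(C_x) = 0 for all x ∈ [0,∞)² and all t ≥ 0, where ζ_+(t) = Σ_{k=1}^K ζ_k(t). -/

import Mathlib

open MeasureTheory Set Filter Topology
open scoped ENNReal

noncomputable section

namespace OverloadedFIFO

/-- The complement `G(x) = Γ((x, ∞))` of the cumulative distribution function of `Γ`. -/
def Gk (Γ : MeasureTheory.Measure ℝ) (x : ℝ) : ℝ := (Γ (Set.Ioi x)).toReal

/-- Model data: `K` job classes with arrival rates `lam`, service rates `mu`, and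
deadline (patience) distributions `Γ`, in the overloaded regime `ρ > 1`.  Each `Γ k` is a
Borel probability measure on `[0,∞)` (no mass on negatives), with continuous c.d.f.
(no atoms, in particular `Γ k {0} = 0`) and finite mean. -/
structure Data (K : ℕ) where
  lam : Fin K → ℝ
  mu : Fin K → ℝ
  Γ : Fin K → MeasureTheory.Measure ℝ
  lam_pos : ∀ k, 0 < lam k
  mu_pos : ∀ k, 0 < mu k
  Γ_prob : ∀ k, MeasureTheory.IsProbabilityMeasure (Γ k)
  Γ_null_neg : ∀ k, Γ k (Set.Iio 0) = 0
  Γ_noAtom : ∀ k, ∀ x : ℝ, Γ k {x} = 0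
  Γ_finite_mean : ∀ k, MeasureTheory.Integrable id (Γ k)
  rho_gt_one : 1 < ∑ k, lam k / mu k

instance {K : ℕ} (D : Data K) (k : Fin K) : IsProbabilityMeasure (D.Γ k) := D.Γ_prob k

/-- `ρ_k = λ_k / μ_k`. -/
def Data.rho {K : ℕ} (D : Data K) (k : Fin K) : ℝ := D.lam k / D.mu k

/-- `ρ = Σ_k ρ_k`. -/
def Data.rhoTot {K : ℕ} (D : Data K) : ℝ := ∑ k, D.rho k

/-- A workload fluid model solution: a nonnegative function `w` on `[0,∞)` satisfying
`w(t) = w(0) + Σ_k ρ_k ∫_0^t G_k(w(s)) ds − t` for all `t ≥ 0`. -/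
def IsWorkloadSol {K : ℕ} (D : Data K) (w : ℝ → ℝ) : Prop :=
  (∀ t : ℝ, 0 ≤ t → 0 ≤ w t) ∧
  (∀ k : Fin K, ∀ t : ℝ, 0 ≤ t →
    IntervalIntegrable (fun s => Gk (D.Γ k) (w s)) volume 0 t) ∧
  (∀ t : ℝ, 0 ≤ t →
    w t = w 0 + (∑ k, D.rho k * ∫ s in (0:ℝ)..t, Gk (D.Γ k) (w s)) - t)

/-- `w_l = sup {u ≥ 0 : Σ_k ρ_k G_k(u) > 1}`. -/
def wl {K : ℕ} (D : Data K) : ℝ :=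
  sSup {u : ℝ | 0 ≤ u ∧ 1 < ∑ k, D.rho k * Gk (D.Γ k) u}

/-- `w_u = sup {u ≥ 0 : Σ_k ρ_k G_k(u) ≥ 1}`. -/
def wu {K : ℕ} (D : Data K) : ℝ :=
  sSup {u : ℝ | 0 ≤ u ∧ 1 ≤ ∑ k, D.rho k * Gk (D.Γ k) u}

/-- `d_max = max_k sup {x ≥ 0 : G_k(x) > 0} ∈ (0,∞]`, as an extended nonnegative real. -/
def dmax {K : ℕ} (D : Data K) : ℝ≥0∞ :=
  ⨆ k, sSup (ENNReal.ofReal '' {x : ℝ | 0 ≤ x ∧ 0 < Gk (D.Γ k) x})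

/-- `τ(t) = inf {s ∈ [0,t] : w(s) + s ≥ t}`. -/
def tauF (w : ℝ → ℝ) (t : ℝ) : ℝ := sInf {s : ℝ | 0 ≤ s ∧ s ≤ t ∧ t ≤ w s + s}

/-- The nonnegative quadrant `[0,∞)²`. -/
def Q : Set (ℝ × ℝ) := {p | 0 ≤ p.1 ∧ 0 ≤ p.2}

/-- The shift `B_x = {y ∈ [0,∞)² : y − x ∈ B}` of a set `B ⊆ [0,∞)²`. -/
def shift (B : Set (ℝ × ℝ)) (x : ℝ × ℝ) : Set (ℝ × ℝ) :=
  {y | y ∈ Q ∧ (y.1 - x.1, y.2 - x.2) ∈ B}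

/-- Diagonal shift `B_t = B_{(t,t)}`. -/
def shiftd (B : Set (ℝ × ℝ)) (t : ℝ) : Set (ℝ × ℝ) := shift B (t, t)

/-- The set `C = ([0,∞)×{0}) ∪ ({0}×[0,∞))`. -/
def Cset : Set (ℝ × ℝ) := {p | (0 ≤ p.1 ∧ p.2 = 0) ∨ (p.1 = 0 ∧ 0 ≤ p.2)}

/-- The `κ`-enlargement `B^κ = {x ∈ [0,∞)² : inf_{y ∈ B} ‖x−y‖ < κ}` (Euclidean norm). -/
def enlarge (B : Set (ℝ × ℝ)) (κ : ℝ) : Set (ℝ × ℝ) :=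
  {x | x ∈ Q ∧ ∃ y ∈ B, Real.sqrt ((x.1 - y.1) ^ 2 + (x.2 - y.2) ^ 2) < κ}

/-- `w_ϑ = sup {x ≥ 0 : ϑ_+([x,∞)×[0,∞)) > 0}` for a `K`-tuple `ϑ` of measures on `[0,∞)²`. -/
def wMeas {K : ℕ} (ϑ : Fin K → MeasureTheory.Measure (ℝ × ℝ)) : ℝ :=
  sSup {x : ℝ | 0 ≤ x ∧ 0 < ∑ k, ϑ k (Set.Ici x ×ˢ Set.Ici (0:ℝ))}

/-- Membership in the set `I` of admissible initial measures: each `ϑ k` is a finite Borel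
measure on `[0,∞)²`; (I.1) the superposition charges no corner set `C_x`, `x ∈ [0,∞)²`;
(I.2) `w_ϑ < ∞`; (I.3) `max_k G_k(w_ϑ − ε) > 0` for every `ε > 0`. -/
def MemI {K : ℕ} (D : Data K) (ϑ : Fin K → MeasureTheory.Measure (ℝ × ℝ)) : Prop :=
  (∀ k, IsFiniteMeasure (ϑ k)) ∧
  (∀ k, ϑ k Qᶜ = 0) ∧
  (∀ x ∈ Q, (∑ k, ϑ k (shift Cset x)) = 0) ∧
  BddAbove {x : ℝ | 0 ≤ x ∧ 0 < ∑ k, ϑ k (Set.Ici x ×ˢ Set.Ici (0:ℝ))} ∧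
  (∀ ε : ℝ, 0 < ε → ∃ k, 0 < Gk (D.Γ k) (wMeas ϑ - ε))

/-- `δ⁺_w`: the Dirac measure at `w` if `w > 0`, and the zero measure otherwise. -/
def deltaPlus (w : ℝ) : MeasureTheory.Measure ℝ :=
  if 0 < w then MeasureTheory.Measure.dirac w else 0

instance (w : ℝ) : SFinite (deltaPlus w) := by
  unfold deltaPlus; split_ifs <;> infer_instance

/-- `(δ⁺_w × Γ)(B)`, as a real number. -/
def kern (Γ : MeasureTheory.Measure ℝ) (w : ℝ) (B : Set (ℝ × ℝ)) : ℝ :=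
  (((deltaPlus w).prod Γ) B).toReal

/-- A (measure-valued) fluid model solution with initial measure `ϑ`: a family
`ζ(t) = (ζ_1(t),…,ζ_K(t))` of finite Borel measures on `[0,∞)²` with `ζ(0) = ϑ` satisfying
`ζ_k(t)(B) = ϑ_k(B_t) + λ_k ∫_0^t (δ⁺_{w(s)} × Γ_k)(B_{t−s}) ds` for every Borel
`B ⊆ [0,∞)²` and `t ≥ 0`, where `w` is the (unique) workload fluid model solution with
`w(0) = w_ϑ`. -/
def IsFluidSol {K : ℕ} (D : Data K) (ϑ : Fin K → MeasureTheory.Measure (ℝ × ℝ))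
    (ζ : ℝ → Fin K → MeasureTheory.Measure (ℝ × ℝ)) : Prop :=
  ∃ w : ℝ → ℝ, IsWorkloadSol D w ∧ w 0 = wMeas ϑ ∧
    (∀ t : ℝ, 0 ≤ t → ∀ k, IsFiniteMeasure (ζ t k) ∧ ζ t k Qᶜ = 0) ∧
    (∀ k, ζ 0 k = ϑ k) ∧
    (∀ k, ∀ B : Set (ℝ × ℝ), B ⊆ Q → MeasurableSet B → ∀ t : ℝ, 0 ≤ t →
      IntervalIntegrable (fun s => kern (D.Γ k) (w s) (shiftd B (t - s))) volume 0 t ∧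
      ζ t k B = ϑ k (shiftd B t) +
        ENNReal.ofReal (D.lam k * ∫ s in (0:ℝ)..t, kern (D.Γ k) (w s) (shiftd B (t - s))))

/-- The candidate invariant state `θ^w`:
`θ^w_k(B) = λ_k ∫_0^w Γ_k({p ≥ u : (w−u, p−u) ∈ B}) du`. -/
def thetaW {K : ℕ} (D : Data K) (w : ℝ) (k : Fin K) : MeasureTheory.Measure (ℝ × ℝ) :=
  ENNReal.ofReal (D.lam k) •
    MeasureTheory.Measure.map (fun up : ℝ × ℝ => (w - up.1, up.2 - up.1))
      ((((MeasureTheory.volume.restrict (Set.Ioo (0:ℝ) w))).prod (D.Γ k)).restrict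
        {up : ℝ × ℝ | up.1 ≤ up.2})

/-! ### Auxiliary lemmas -/

lemma Gk_nonneg (Γ : MeasureTheory.Measure ℝ) (x : ℝ) : 0 ≤ Gk Γ x :=
  ENNReal.toReal_nonneg

lemma Gk_le_one (Γ : MeasureTheory.Measure ℝ) [IsProbabilityMeasure Γ] (x : ℝ) :
    Gk Γ x ≤ 1 := by
  unfold Gk
  have h : Γ (Set.Ioi x) ≤ 1 := prob_le_one
  calc (Γ (Set.Ioi x)).toReal ≤ (1 : ℝ≥0∞).toReal :=
        (ENNReal.toReal_le_toReal (measure_ne_top _ _) (by simp)).mpr h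
    _ = 1 := by simp

lemma Gk_antitone (Γ : MeasureTheory.Measure ℝ) [IsProbabilityMeasure Γ] :
    Antitone (Gk Γ) := by
  intro u v huv
  unfold Gk
  exact (ENNReal.toReal_le_toReal (measure_ne_top _ _) (measure_ne_top _ _)).mpr
    (measure_mono (Set.Ioi_subset_Ioi huv))

lemma measurableSet_Q : MeasurableSet Q := by
  have h : Q = (Prod.fst ⁻¹' Set.Ici (0:ℝ)) ∩ (Prod.snd ⁻¹' Set.Ici (0:ℝ)) := rfl
  rw [h]
  exact (measurable_fst measurableSet_Ici).inter (measurable_snd measurableSet_Ici)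

lemma measurableSet_Cset : MeasurableSet Cset := by
  have h : Cset = ((Prod.fst ⁻¹' Set.Ici (0:ℝ)) ∩ (Prod.snd ⁻¹' ({0} : Set ℝ))) ∪
      ((Prod.fst ⁻¹' ({0} : Set ℝ)) ∩ (Prod.snd ⁻¹' Set.Ici (0:ℝ))) := by
    ext p
    simp only [Cset, Set.mem_setOf_eq, Set.mem_union, Set.mem_inter_iff, Set.mem_preimage,
      Set.mem_Ici, Set.mem_singleton_iff]
  rw [h]
  exact ((measurable_fst measurableSet_Ici).inter
      (measurable_snd (measurableSet_singleton _))).union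
    ((measurable_fst (measurableSet_singleton _)).inter (measurable_snd measurableSet_Ici))

lemma measurableSet_shift {B : Set (ℝ × ℝ)} (hB : MeasurableSet B) (x : ℝ × ℝ) :
    MeasurableSet (shift B x) := by
  have h : shift B x = Q ∩ (fun y : ℝ × ℝ => (y.1 - x.1, y.2 - x.2)) ⁻¹' B := by
    ext y; rfl
  rw [h]
  exact measurableSet_Q.inter (hB.preimage (by fun_prop))

lemma measurableSet_shiftd {B : Set (ℝ × ℝ)} (hB : MeasurableSet B) (t : ℝ) :
    MeasurableSet (shiftd B t) := measurableSet_shift hB _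

/-- Pointwise vanishing of the kernel on shifted corner sets, away from the critical level. -/
lemma kern_corner_zero (Γ : MeasureTheory.Measure ℝ) [IsProbabilityMeasure Γ]
    (hatom : ∀ x : ℝ, Γ {x} = 0)
    (w' r x1 x2 : ℝ) (h : ¬ (0 < w' ∧ w' = r + x1)) :
    kern Γ w' (shiftd (shift Cset (x1, x2)) r) = 0 := by
  unfold kern
  by_cases hw : 0 < w'
  · have hd : deltaPlus w' = MeasureTheory.Measure.dirac w' := if_pos hw
    have hB : MeasurableSet (shiftd (shift Cset (x1, x2)) r) :=
      measurableSet_shiftd (measurableSet_shift measurableSet_Cset _) _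
    rw [hd, MeasureTheory.Measure.dirac_prod,
      MeasureTheory.Measure.map_apply measurable_prodMk_left hB]
    have hsub : (Prod.mk w' ⁻¹' shiftd (shift Cset (x1, x2)) r) ⊆ {r + x2} := by
      intro p hp
      simp only [Set.mem_preimage, shiftd, shift, Cset, Q, Set.mem_setOf_eq] at hp
      obtain ⟨-, -, hC⟩ := hp
      rcases hC with ⟨-, h2⟩ | ⟨h1, -⟩
      · have : p = r + x2 := by linarith
        simp [this]
      · exact absurd ⟨hw, by linarith⟩ h
    have h0 : Γ (Prod.mk w' ⁻¹' shiftd (shift Cset (x1, x2)) r) = 0 :=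
      measure_mono_null hsub (hatom _)
    simp [h0]
  · have hd : deltaPlus w' = 0 := if_neg hw
    rw [hd]
    have h1 : ((0 : MeasureTheory.Measure ℝ).prod Γ) Set.univ = 0 := by
      rw [← Set.univ_prod_univ, MeasureTheory.Measure.prod_prod]; simp
    have h0 : ((0 : MeasureTheory.Measure ℝ).prod Γ) (shiftd (shift Cset (x1, x2)) r) = 0 :=
      measure_mono_null (Set.subset_univ _) h1
    simp [h0]

/-- For `ϑ ∈ I` and the fluid model solution `ζ` with initial measure `ϑ`,
`ζ_+(t)(C_x) = 0` for all `x ∈ [0,∞)²` and all `t ≥ 0`. -/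
theorem fluid_no_corner_mass {K : ℕ} (D : Data K)
    (ϑ : Fin K → MeasureTheory.Measure (ℝ × ℝ)) (hϑ : MemI D ϑ)
    (ζ : ℝ → Fin K → MeasureTheory.Measure (ℝ × ℝ)) (hζ : IsFluidSol D ϑ ζ) :
    ∀ t : ℝ, 0 ≤ t → ∀ x ∈ Q, (∑ k, ζ t k (shift Cset x)) = 0 := by
  obtain ⟨w, hw, hw0, _hfin, _hzero, hform⟩ := hζ
  obtain ⟨hw_nonneg, hw_int, hw_eq⟩ := hw
  intro t ht x hx
  -- positivity facts
  have hρk : ∀ k : Fin K, 0 < D.rho k := fun k => div_pos (D.lam_pos k) (D.mu_pos k)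
  have hρsum : 0 < ∑ k, D.rho k := by
    have h1 : (1:ℝ) < ∑ k, D.rho k := by simpa [Data.rho] using D.rho_gt_one
    linarith
  -- interval integrability on subintervals of [0, t]
  have hII : ∀ k : Fin K, ∀ p q : ℝ, p ∈ Set.Icc 0 t → q ∈ Set.Icc 0 t →
      IntervalIntegrable (fun s => Gk (D.Γ k) (w s)) volume p q := by
    intro k p q hp hq
    refine (hw_int k t ht).mono_set ?_
    refine Set.uIcc_subset_uIcc ?_ ?_ <;> rw [Set.uIcc_of_le ht]
    · exact hp
    · exact hq
  -- the integral identity on subintervals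
  have hF2 : ∀ p q : ℝ, 0 ≤ p → p ≤ q → q ≤ t →
      w q + q - (w p + p) = ∑ k, D.rho k * ∫ s in p..q, Gk (D.Γ k) (w s) := by
    intro p q hp hpq hqt
    have h1 := hw_eq p hp
    have h2 := hw_eq q (le_trans hp hpq)
    have hdiff : (∑ k, D.rho k * ∫ s in (0:ℝ)..q, Gk (D.Γ k) (w s))
        - (∑ k, D.rho k * ∫ s in (0:ℝ)..p, Gk (D.Γ k) (w s))
        = ∑ k, D.rho k * ∫ s in p..q, Gk (D.Γ k) (w s) := by
      rw [← Finset.sum_sub_distrib]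
      refine Finset.sum_congr rfl fun k _ => ?_
      rw [← mul_sub]
      congr 1
      have hadj := intervalIntegral.integral_add_adjacent_intervals
        (hII k 0 p ⟨le_refl 0, ht⟩ ⟨hp, le_trans hpq hqt⟩)
        (hII k p q ⟨hp, le_trans hpq hqt⟩ ⟨le_trans hp hpq, hqt⟩)
      linarith
    linarith
  -- monotonicity of s ↦ w s + s
  have hmono : ∀ p q : ℝ, 0 ≤ p → p ≤ q → q ≤ t → w p + p ≤ w q + q := by
    intro p q hp hpq hqt
    have h := hF2 p q hp hpq hqt
    have hnn : 0 ≤ ∑ k, D.rho k * ∫ s in p..q, Gk (D.Γ k) (w s) :=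
      Finset.sum_nonneg fun k _ => mul_nonneg (hρk k).le
        (intervalIntegral.integral_nonneg hpq fun u _ => Gk_nonneg _ _)
    linarith
  -- the critical set is null
  have hSnull : ∀ c : ℝ,
      volume {s : ℝ | s ∈ Set.Ioc 0 t ∧ w s + s = c ∧ 0 < w s} = 0 := by
    intro c
    set S := {s : ℝ | s ∈ Set.Ioc 0 t ∧ w s + s = c ∧ 0 < w s} with hSdef
    by_contra hS
    -- S has two distinct points
    have hnt : ∃ a ∈ S, ∃ b ∈ S, a ≠ b := by
      by_contra hsub
      push_neg at hsub
      have hss : S.Subsingleton := fun a ha b hb => hsub a ha b hb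
      exact hS (hss.measure_zero volume)
    obtain ⟨a0, ha0, b0, hb0, hne⟩ := hnt
    -- order them
    obtain ⟨a, b, ha, hb, hab⟩ : ∃ a b : ℝ, a ∈ S ∧ b ∈ S ∧ a < b := by
      rcases lt_or_gt_of_ne hne with h | h
      · exact ⟨a0, b0, ha0, hb0, h⟩
      · exact ⟨b0, a0, hb0, ha0, h⟩
    have h0a : (0:ℝ) < a := ha.1.1
    have hbt : b ≤ t := hb.1.2
    -- w s + s ≡ c on [a, b]
    have hfc : ∀ s ∈ Set.Icc a b, w s + s = c := by
      intro s hs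
      have hl := hmono a s h0a.le hs.1 (le_trans hs.2 hbt)
      have hr := hmono s b (le_trans h0a.le hs.1) hs.2 hbt
      have hac : w a + a = c := ha.2.1
      have hbc : w b + b = c := hb.2.1
      linarith
    -- Icc a b ⊆ S
    have hIccS : Set.Icc a b ⊆ S := by
      intro s hs
      refine ⟨⟨lt_of_lt_of_le h0a hs.1, le_trans hs.2 hbt⟩, hfc s hs, ?_⟩
      have h1 : w s + s = c := hfc s hs
      have h2 : w b + b = c := hb.2.1
      have h3 : 0 < w b := hb.2.2
      linarith [hs.2]
    -- the sum of the integrals vanishes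
    have hsum0 : (∑ k, D.rho k * ∫ s in a..b, Gk (D.Γ k) (w s)) = 0 := by
      have h := hF2 a b h0a.le hab.le hbt
      have hac : w a + a = c := ha.2.1
      have hbc : w b + b = c := hb.2.1
      linarith
    have hterm : ∀ k : Fin K, (∫ s in a..b, Gk (D.Γ k) (w s)) = 0 := by
      intro k
      have hnn : ∀ j ∈ Finset.univ, (0:ℝ) ≤ D.rho j * ∫ s in a..b, Gk (D.Γ j) (w s) :=
        fun j _ => mul_nonneg (hρk j).le
          (intervalIntegral.integral_nonneg hab.le fun u _ => Gk_nonneg _ _)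
      have h := (Finset.sum_eq_zero_iff_of_nonneg hnn).mp hsum0 k (Finset.mem_univ k)
      rcases mul_eq_zero.mp h with h' | h'
      · exact absurd h' (ne_of_gt (hρk k))
      · exact h'
    -- G_k ∘ w = 0 a.e. on Ioc a b
    have hae : ∀ᵐ s ∂(volume.restrict (Set.Ioc a b)), ∀ k, Gk (D.Γ k) (w s) = 0 := by
      rw [ae_all_iff]
      intro k
      have hint : MeasureTheory.IntegrableOn (fun s => Gk (D.Γ k) (w s)) (Set.Ioc a b) :=
        (hII k a b ⟨h0a.le, le_trans hab.le hbt⟩ ⟨le_trans h0a.le hab.le, hbt⟩).1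
      have h0 : (∫ s in Set.Ioc a b, Gk (D.Γ k) (w s)) = 0 := by
        rw [← intervalIntegral.integral_of_le hab.le]; exact hterm k
      have := (integral_eq_zero_iff_of_nonneg_ae
        (Eventually.of_forall fun s => Gk_nonneg _ _) hint).mp h0
      filter_upwards [this] with s hs using hs
    -- extract two good points
    set GS := {s : ℝ | s ∈ Set.Ioc a b ∧ ∀ k, Gk (D.Γ k) (w s) = 0} with hGSdef
    have hGSpos : volume.restrict (Set.Ioc a b) GS ≠ 0 := by
      intro h0
      have hN : volume.restrict (Set.Ioc a b) {s : ℝ | ¬ ∀ k, Gk (D.Γ k) (w s) = 0} = 0 := hae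
      have hcover : Set.Ioc a b ⊆ GS ∪ {s : ℝ | ¬ ∀ k, Gk (D.Γ k) (w s) = 0} := by
        intro s hs
        by_cases hP : ∀ k, Gk (D.Γ k) (w s) = 0
        · exact Or.inl ⟨hs, hP⟩
        · exact Or.inr hP
      have hle := measure_mono (μ := volume.restrict (Set.Ioc a b)) hcover
      have hun := measure_union_le (μ := volume.restrict (Set.Ioc a b)) GS
        {s : ℝ | ¬ ∀ k, Gk (D.Γ k) (w s) = 0}
      have hIoc : volume.restrict (Set.Ioc a b) (Set.Ioc a b) = ENNReal.ofReal (b - a) := by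
        rw [Measure.restrict_apply_self, Real.volume_Ioc]
      rw [hIoc] at hle
      rw [h0, hN] at hun
      simp only [zero_add] at hun
      have : ENNReal.ofReal (b - a) = 0 := le_antisymm (le_trans hle hun) zero_le
      rw [ENNReal.ofReal_eq_zero] at this
      linarith
    have hGSnt : ∃ s1 ∈ GS, ∃ s2 ∈ GS, s1 ≠ s2 := by
      by_contra hsub
      push_neg at hsub
      have hss : GS.Subsingleton := fun p hp q hq => hsub p hp q hq
      refine hGSpos (le_antisymm ?_ zero_le)
      calc volume.restrict (Set.Ioc a b) GS ≤ volume GS :=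
            Measure.restrict_apply_le _ _
        _ = 0 := hss.measure_zero volume
    obtain ⟨p1, hp1, p2, hp2, hpne⟩ := hGSnt
    obtain ⟨s1, s2, hs1, hs2, hlt⟩ : ∃ s1 s2 : ℝ, s1 ∈ GS ∧ s2 ∈ GS ∧ s1 < s2 := by
      rcases lt_or_gt_of_ne hpne with h | h
      · exact ⟨p1, p2, hp1, hp2, h⟩
      · exact ⟨p2, p1, hp2, hp1, h⟩
    have hs1S : s1 ∈ S := hIccS (Set.Ioc_subset_Icc_self hs1.1)
    have hs2S : s2 ∈ S := hIccS (Set.Ioc_subset_Icc_self hs2.1)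
    have hG1 : ∀ k, Gk (D.Γ k) (w s1) = 0 := hs1.2
    have hG2 : ∀ k, Gk (D.Γ k) (w s2) = 0 := hs2.2
    have hwlt : w s2 < w s1 := by
      have h1 : w s1 + s1 = c := hs1S.2.1
      have h2 : w s2 + s2 = c := hs2S.2.1
      linarith
    have hs1t : s1 ≤ t := hs1S.1.2
    -- case analysis
    rcases le_or_gt (w s1) (w 0) with hcase | hcase
    · -- use (I.3)
      have hε : 0 < wMeas ϑ - w s2 := by rw [← hw0]; linarith
      obtain ⟨k, hk⟩ := hϑ.2.2.2.2 (wMeas ϑ - w s2) hε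
      have : wMeas ϑ - (wMeas ϑ - w s2) = w s2 := by ring
      rw [this] at hk
      rw [hG2 k] at hk
      exact lt_irrefl 0 hk
    · -- upcrossing argument
      set v := max (w 0) (w s2) with hvdef
      have hv : v < w s1 := max_lt hcase hwlt
      have hGv : ∀ k, Gk (D.Γ k) v = 0 := by
        intro k
        have h1 : Gk (D.Γ k) v ≤ Gk (D.Γ k) (w s2) := Gk_antitone _ (le_max_right _ _)
        have h2 := Gk_nonneg (D.Γ k) v
        rw [hG2 k] at h1
        linarith
      set E := {s : ℝ | s ∈ Set.Icc 0 s1 ∧ w s ≤ v} with hEdef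
      have hs10 : (0:ℝ) ≤ s1 := le_trans h0a.le (le_of_lt hs1.1.1)
      have hE0 : (0:ℝ) ∈ E := ⟨⟨le_refl 0, hs10⟩, le_max_left _ _⟩
      have hEne : E.Nonempty := ⟨0, hE0⟩
      have hEbdd : BddAbove E := ⟨s1, fun s hs => hs.1.2⟩
      set τ := sSup E with hτdef
      have hτ0 : 0 ≤ τ := le_csSup hEbdd hE0
      have hτσ : τ ≤ s1 := csSup_le hEne fun s hs => hs.1.2
      have habove : ∀ s : ℝ, τ < s → s ≤ s1 → v < w s := by
        intro s h1 h2
        by_contra hle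
        push_neg at hle
        have hmem : s ∈ E := ⟨⟨le_trans hτ0 h1.le, h2⟩, hle⟩
        exact absurd (le_csSup hEbdd hmem) (not_le.mpr h1)
      have hεbound : ∀ ε : ℝ, 0 < ε → w s1 ≤ v + (∑ k, D.rho k) * ε := by
        intro ε hε
        obtain ⟨τ', hτ'E, hτ'gt⟩ := exists_lt_of_lt_csSup hEne (show τ - ε < τ by linarith)
        have hτ'le : τ' ≤ τ := le_csSup hEbdd hτ'E
        have hτ'0 : 0 ≤ τ' := hτ'E.1.1
        have hτ'σ : τ' ≤ s1 := hτ'E.1.2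
        have hwτ' : w τ' ≤ v := hτ'E.2
        have hint1 : ∀ k : Fin K, (∫ s in τ'..τ, Gk (D.Γ k) (w s)) ≤ τ - τ' := by
          intro k
          have h1 := hII k τ' τ ⟨hτ'0, le_trans hτ'σ hs1t⟩ ⟨hτ0, le_trans hτσ hs1t⟩
          calc (∫ s in τ'..τ, Gk (D.Γ k) (w s)) ≤ ∫ _ in τ'..τ, (1:ℝ) :=
                intervalIntegral.integral_mono_on hτ'le h1 intervalIntegrable_const
                  (fun s _ => Gk_le_one _ _)
            _ = τ - τ' := by simp
        have hint2 : ∀ k : Fin K, (∫ s in τ..s1, Gk (D.Γ k) (w s)) ≤ 0 := by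
          intro k
          rw [intervalIntegral.integral_of_le hτσ]
          refine setIntegral_nonpos measurableSet_Ioc fun s hs => ?_
          have hva := habove s hs.1 hs.2
          have h1 : Gk (D.Γ k) (w s) ≤ Gk (D.Γ k) v := Gk_antitone _ hva.le
          rw [hGv k] at h1
          exact h1
        have hsplit : ∀ k : Fin K,
            (∫ s in τ'..τ, Gk (D.Γ k) (w s)) + (∫ s in τ..s1, Gk (D.Γ k) (w s))
              = ∫ s in τ'..s1, Gk (D.Γ k) (w s) := fun k =>
          intervalIntegral.integral_add_adjacent_intervals
            (hII k τ' τ ⟨hτ'0, le_trans hτ'σ hs1t⟩ ⟨hτ0, le_trans hτσ hs1t⟩)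
            (hII k τ s1 ⟨hτ0, le_trans hτσ hs1t⟩ ⟨hs10, hs1t⟩)
        have hsum_le : (∑ k, D.rho k * ∫ s in τ'..s1, Gk (D.Γ k) (w s))
            ≤ (∑ k, D.rho k) * ε := by
          rw [Finset.sum_mul]
          refine Finset.sum_le_sum fun k _ => ?_
          have h1 := hint1 k
          have h2 := hint2 k
          have h3 := hsplit k
          have h4 : (∫ s in τ'..s1, Gk (D.Γ k) (w s)) ≤ ε := by linarith
          exact mul_le_mul_of_nonneg_left h4 (hρk k).le
        have hF := hF2 τ' s1 hτ'0 hτ'σ hs1t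
        linarith
      have hle : w s1 ≤ v := by
        by_contra hgt
        push_neg at hgt
        have hpos : 0 < (w s1 - v) / (2 * ∑ k, D.rho k) :=
          div_pos (by linarith) (by linarith)
        have hb := hεbound _ hpos
        have heq : (∑ k, D.rho k) * ((w s1 - v) / (2 * ∑ k, D.rho k)) = (w s1 - v) / 2 := by
          field_simp
        rw [heq] at hb
        linarith
      linarith
  -- assemble
  refine Finset.sum_eq_zero fun k _ => ?_
  have hBQ : shift Cset x ⊆ Q := fun y hy => hy.1
  have hBmeas : MeasurableSet (shift Cset x) := measurableSet_shift measurableSet_Cset x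
  obtain ⟨_hint, hform'⟩ := hform k (shift Cset x) hBQ hBmeas t ht
  rw [hform']
  have hϑ0 : ϑ k (shiftd (shift Cset x) t) = 0 := by
    have hxq : ((x.1 + t, x.2 + t) : ℝ × ℝ) ∈ Q := ⟨add_nonneg hx.1 ht, add_nonneg hx.2 ht⟩
    have hsum := hϑ.2.2.1 (x.1 + t, x.2 + t) hxq
    have hk0 : ϑ k (shift Cset (x.1 + t, x.2 + t)) = 0 :=
      Finset.sum_eq_zero_iff.mp hsum k (Finset.mem_univ k)
    refine measure_mono_null ?_ hk0
    intro y hy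
    simp only [shiftd, shift, Set.mem_setOf_eq] at hy ⊢
    obtain ⟨hyQ, _, hC⟩ := hy
    refine ⟨hyQ, ?_⟩
    have e1 : y.1 - (x.1 + t) = y.1 - t - x.1 := by ring
    have e2 : y.2 - (x.2 + t) = y.2 - t - x.2 := by ring
    rw [e1, e2]
    exact hC
  have hker0 : (∫ s in (0:ℝ)..t, kern (D.Γ k) (w s) (shiftd (shift Cset x) (t - s))) = 0 := by
    have hcongr : ∀ᵐ s ∂(volume : Measure ℝ), s ∈ Set.uIoc 0 t →
        kern (D.Γ k) (w s) (shiftd (shift Cset x) (t - s)) = 0 := by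
      filter_upwards [measure_eq_zero_iff_ae_notMem.mp (hSnull (t + x.1))] with s hs hmem
      rw [Set.uIoc_of_le ht] at hmem
      have hxeta : x = (x.1, x.2) := rfl
      rw [hxeta]
      refine kern_corner_zero (D.Γ k) (D.Γ_noAtom k) (w s) (t - s) x.1 x.2 ?_
      rintro ⟨hws, heq⟩
      exact hs ⟨hmem, by linarith, hws⟩
    calc (∫ s in (0:ℝ)..t, kern (D.Γ k) (w s) (shiftd (shift Cset x) (t - s)))
        = ∫ _ in (0:ℝ)..t, (0:ℝ) := intervalIntegral.integral_congr_ae hcongr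
      _ = 0 := by simp
  rw [hϑ0, hker0]
  simp

end OverloadedFIFO
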